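/- Suppose a finite group G of order N acts on a compact Riemann surface of genus g ≥ 2 with signature (h; m_1, …, m_l) of Teichmüller dimension d = 3h - 3 + l ≥ 2, so that the Riemann–Hurwitz formula 2(g-1) = N·(2h - 2 + Σ_{i=1}^l (1 - 1/m_i)) holds. Then N ≤ 4(g-1)/(d-1). -/
import Mathlib


/-- If a group of order N acts on a genus-g surface (g ≥ 2) with signature
(h; m_1,…,m_l) of Teichmüller dimension d = 3h - 3 + l ≥ 2, with Riemann–Hurwitz
2(g-1) = N(2h - 2 + Σ(1 - 1/m_i)), then N ≤ 4(g-1)/(d-1). -/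
theorem order_bound_dim_ge_two (N g d h l : ℕ) (m : Fin l → ℕ)
    (hN : 1 ≤ N) (hg : 2 ≤ g) (hm : ∀ i, 2 ≤ m i)
    (hd : 2 ≤ d) (hdim : 3 * (h : ℤ) - 3 + l = d)
    (hRH : 2 * ((g : ℚ) - 1) = N * (2 * (h : ℚ) - 2 + ∑ i, (1 - 1 / (m i : ℚ)))) :
    (N : ℚ) ≤ 4 * ((g : ℚ) - 1) / ((d : ℚ) - 1) := by
  have hdimQ : 3 * (h : ℚ) - 3 + l = d := by exact_mod_cast hdim
  have hsum : (l : ℚ) * (1/2) ≤ ∑ i, (1 - 1 / (m i : ℚ)) := by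
    calc (l : ℚ) * (1/2) = ∑ _i : Fin l, (1/2 : ℚ) := by
          simp [Finset.sum_const, mul_comm]
      _ ≤ ∑ i, (1 - 1 / (m i : ℚ)) := by
          apply Finset.sum_le_sum
          intro i _
          have h2 : (2 : ℚ) ≤ (m i : ℚ) := by exact_mod_cast hm i
          have hpos : (0 : ℚ) < (m i : ℚ) := by linarith
          have : 1 / (m i : ℚ) ≤ 1/2 := by
            rw [div_le_div_iff₀ hpos (by norm_num)]; linarith
          linarith
  have hdpos : (1 : ℚ) ≤ (d : ℚ) - 1 := by
    have : (2 : ℚ) ≤ (d : ℚ) := by exact_mod_cast hd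
    linarith
  have hNpos : (1 : ℚ) ≤ (N : ℚ) := by exact_mod_cast hN
  have hkey : (N : ℚ) * ((d : ℚ) - 1) ≤ 4 * ((g : ℚ) - 1) := by
    have hchi : (d : ℚ) - 1 ≤ 2 * (2 * (h : ℚ) - 2 + ∑ i, (1 - 1 / (m i : ℚ))) := by
      have hh : (0 : ℚ) ≤ (h : ℚ) := Nat.cast_nonneg h
      nlinarith [hsum, hdimQ]
    calc (N : ℚ) * ((d : ℚ) - 1)
        ≤ (N : ℚ) * (2 * (2 * (h : ℚ) - 2 + ∑ i, (1 - 1 / (m i : ℚ)))) := by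
          apply mul_le_mul_of_nonneg_left hchi (by linarith)
      _ = 2 * (2 * ((g : ℚ) - 1)) := by rw [hRH]; ring
      _ = 4 * ((g : ℚ) - 1) := by ring
  rw [le_div_iff₀ (by linarith : (0:ℚ) < (d : ℚ) - 1)]
  exact hkey
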